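/- When EB beats the no-information design in the two-stratum problem: Let s > 0, N > 0, a₁, a₂ ≥ 0 with |a₂ − a₁| < N, and let â₁, â₂ ≥ 0 with |â₂ − â₁| < N be plug-in estimates. Define f(t) = s²/(t + a₁) + s²/(N − t + a₂), Δâ = â₂ − â₁, and Δa = a₂ − a₁. Then f((N + Δâ)/2) ≤ f(N/2) if and only if Δâ · (Δâ − 2Δa) ≤ 0, i.e., if and only if Δâ · Δa ≥ 0 and |Δâ| ≤ 2|Δa|. -/
import Mathlib

set_option maxHeartbeats 1000000

/-- When the empirical Bayes allocation beats the no-information (balanced)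
allocation in the two-stratum problem: with `f t = s²/(t+a₁) + s²/(N−t+a₂)`,
`Δâ = ah₂ − ah₁` (plug-in estimates) and `Δa = a₂ − a₁`, we have
`f ((N+Δâ)/2) ≤ f (N/2)` iff `Δâ (Δâ − 2Δa) ≤ 0`, iff
(`Δâ·Δa ≥ 0` and `|Δâ| ≤ 2|Δa|`). -/
theorem two_stratum_eb_beats_ni
    (s N a₁ a₂ ah₁ ah₂ : ℝ) (hs : 0 < s) (hN : 0 < N)
    (ha₁ : 0 ≤ a₁) (ha₂ : 0 ≤ a₂) (hint : |a₂ - a₁| < N)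
    (hah₁ : 0 ≤ ah₁) (hah₂ : 0 ≤ ah₂) (hinthat : |ah₂ - ah₁| < N)
    (f : ℝ → ℝ) (hf : ∀ t, f t = s ^ 2 / (t + a₁) + s ^ 2 / (N - t + a₂)) :
    (f ((N + (ah₂ - ah₁)) / 2) ≤ f (N / 2) ↔
      (ah₂ - ah₁) * ((ah₂ - ah₁) - 2 * (a₂ - a₁)) ≤ 0) ∧
    ((ah₂ - ah₁) * ((ah₂ - ah₁) - 2 * (a₂ - a₁)) ≤ 0 ↔
      0 ≤ (ah₂ - ah₁) * (a₂ - a₁) ∧ |ah₂ - ah₁| ≤ 2 * |a₂ - a₁|) := by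
  set Δ := ah₂ - ah₁ with hΔ
  set D := a₂ - a₁ with hD
  have habs := abs_lt.mp hinthat
  have hA : 0 < N + 2 * a₁ := by linarith
  have hB : 0 < N + 2 * a₂ := by linarith
  have hAΔ : 0 < N + Δ + 2 * a₁ := by linarith [habs.1]
  have hBΔ : 0 < N - Δ + 2 * a₂ := by linarith [habs.2]
  have e1 : (N + Δ) / 2 + a₁ ≠ 0 := by
    have : (N + Δ) / 2 + a₁ = (N + Δ + 2 * a₁) / 2 := by ring
    rw [this]; positivity
  have e2 : N - (N + Δ) / 2 + a₂ ≠ 0 := by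
    have : N - (N + Δ) / 2 + a₂ = (N - Δ + 2 * a₂) / 2 := by ring
    rw [this]; positivity
  have e3 : N / 2 + a₁ ≠ 0 := by positivity
  have e4 : N - N / 2 + a₂ ≠ 0 := by
    have : N - N / 2 + a₂ = (N + 2 * a₂) / 2 := by ring
    rw [this]; positivity
  constructor
  · have key : f ((N + Δ) / 2) - f (N / 2) =
        (2 * s ^ 2 * ((N + 2 * a₁) + (N + 2 * a₂)) /
          ((N + 2 * a₁) * (N + Δ + 2 * a₁) * (N + 2 * a₂) * (N - Δ + 2 * a₂)))
          * (Δ * (Δ - 2 * D)) := by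
      rw [hf, hf]
      rw [div_add_div _ _ e1 e2, div_add_div _ _ e3 e4, div_sub_div _ _
        (mul_ne_zero e1 e2) (mul_ne_zero e3 e4)]
      rw [div_mul_eq_mul_div, div_eq_div_iff (by positivity) (by positivity)]
      ring
    have hc : 0 < 2 * s ^ 2 * ((N + 2 * a₁) + (N + 2 * a₂)) /
        ((N + 2 * a₁) * (N + Δ + 2 * a₁) * (N + 2 * a₂) * (N - Δ + 2 * a₂)) := by
      positivity
    rw [← sub_nonpos, key]
    constructor
    · intro h
      by_contra hx
      push_neg at hx
      nlinarith [mul_pos hc hx]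
    · intro h
      exact mul_nonpos_of_nonneg_of_nonpos hc.le h
  · constructor
    · intro h
      rcases abs_cases Δ with ⟨h1, h2⟩ | ⟨h1, h2⟩ <;>
        rcases abs_cases D with ⟨h3, h4⟩ | ⟨h3, h4⟩ <;>
        constructor <;> nlinarith
    · rintro ⟨h1, h2⟩
      rcases abs_cases Δ with ⟨h3, h4⟩ | ⟨h3, h4⟩ <;>
        rcases abs_cases D with ⟨h5, h6⟩ | ⟨h5, h6⟩ <;> nlinarith
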